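/- Define g(n, γ) = n·min(1, γ/(n²(n−1))) for integers n ≥ 2 and g(1, γ) = 1 for γ ≥ 0. Then for γ ∈ [n²(n−1), (n+1)n²], the maximum of g(m, γ) over m ∈ {1,…,K} (for any K ≥ n+1) is attained at m = n and equals n; and for γ ∈ [n(n−1)², n²(n−1)], the maximum is attained at m = n and equals γ/(n(n−1)). -/

import Mathlib

/-- Sum DoF of conventional ZF serving n users with total feedback scaling γ shared equally. -/
noncomputable def sumDoF (n : ℕ) (γ : ℝ) : ℝ :=
  if n = 1 then 1 else n * min 1 (γ / (n ^ 2 * ((n : ℝ) - 1)))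

lemma sumDoF_le_card (m : ℕ) (hm : 1 ≤ m) (γ : ℝ) : sumDoF m γ ≤ m := by
  unfold sumDoF
  split_ifs with h
  · simp [h]
  · calc (m : ℝ) * min 1 (γ / ((m : ℝ) ^ 2 * ((m : ℝ) - 1)))
        ≤ m * 1 := by
          apply mul_le_mul_of_nonneg_left (min_le_left _ _) (by positivity)
    _ = m := mul_one _

lemma sumDoF_le_ratio (m : ℕ) (hm : 2 ≤ m) (γ : ℝ) :
    sumDoF m γ ≤ γ / (m * ((m : ℝ) - 1)) := by
  have hm2 : (2 : ℝ) ≤ (m : ℝ) := by exact_mod_cast hm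
  have hne : m ≠ 1 := by omega
  unfold sumDoF
  rw [if_neg hne]
  have key : (m : ℝ) * (γ / ((m : ℝ) ^ 2 * ((m : ℝ) - 1))) = γ / (m * ((m : ℝ) - 1)) := by
    have h1 : (m : ℝ) ≠ 0 := by linarith
    have h2 : (m : ℝ) - 1 ≠ 0 := by intro h; nlinarith [h]
    field_simp
  calc (m : ℝ) * min 1 (γ / ((m : ℝ) ^ 2 * ((m : ℝ) - 1)))
      ≤ m * (γ / ((m : ℝ) ^ 2 * ((m : ℝ) - 1))) :=
        mul_le_mul_of_nonneg_left (min_le_right _ _) (by positivity)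
  _ = _ := key

lemma sumDoF_val (n : ℕ) (hn : 2 ≤ n) (γ : ℝ) (h : (n : ℝ) ^ 2 * ((n : ℝ) - 1) ≤ γ) :
    sumDoF n γ = n := by
  have hn2 : (2 : ℝ) ≤ (n : ℝ) := by exact_mod_cast hn
  have hd : (0 : ℝ) < (n : ℝ) ^ 2 * ((n : ℝ) - 1) := by nlinarith
  have : (1 : ℝ) ≤ γ / ((n : ℝ) ^ 2 * ((n : ℝ) - 1)) := (one_le_div hd).mpr h
  unfold sumDoF
  rw [if_neg (by omega : n ≠ 1), min_eq_left this, mul_one]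

lemma sumDoF_val2 (n : ℕ) (hn : 2 ≤ n) (γ : ℝ) (h : γ ≤ (n : ℝ) ^ 2 * ((n : ℝ) - 1)) :
    sumDoF n γ = γ / (n * ((n : ℝ) - 1)) := by
  have hn2 : (2 : ℝ) ≤ (n : ℝ) := by exact_mod_cast hn
  have hd : (0 : ℝ) < (n : ℝ) ^ 2 * ((n : ℝ) - 1) := by nlinarith
  have : γ / ((n : ℝ) ^ 2 * ((n : ℝ) - 1)) ≤ 1 := (div_le_one hd).mpr h
  unfold sumDoF
  rw [if_neg (by omega : n ≠ 1), min_eq_right this]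
  have h1 : (n : ℝ) ≠ 0 := by linarith
  have h2 : (n : ℝ) - 1 ≠ 0 := by intro h; nlinarith [h]
  field_simp

/-- DoF-optimal number of served users: for γ ∈ [n²(n−1), (n+1)n²] the maximum of
g(m,γ) over m ∈ {1,…,K} is attained at m = n with value n; for γ ∈ [n(n−1)², n²(n−1)]
it is attained at m = n with value γ/(n(n−1)). -/
theorem stmt_12 (n K : ℕ) (hn : 2 ≤ n) (hK : n + 1 ≤ K) :
    ((∀ γ : ℝ, γ ∈ Set.Icc ((n : ℝ) ^ 2 * (n - 1)) (((n : ℝ) + 1) * n ^ 2) →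
        (∀ m ∈ Finset.Icc 1 K, sumDoF m γ ≤ sumDoF n γ) ∧ sumDoF n γ = n)) ∧
    ((∀ γ : ℝ, γ ∈ Set.Icc ((n : ℝ) * (n - 1) ^ 2) ((n : ℝ) ^ 2 * (n - 1)) →
        (∀ m ∈ Finset.Icc 1 K, sumDoF m γ ≤ sumDoF n γ) ∧
          sumDoF n γ = γ / (n * ((n : ℝ) - 1)))) := by
  have hn2 : (2 : ℝ) ≤ (n : ℝ) := by exact_mod_cast hn
  constructor
  · intro γ hγ
    obtain ⟨hγ1, hγ2⟩ := hγ
    have hval : sumDoF n γ = n := sumDoF_val n hn γ hγ1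
    refine ⟨?_, hval⟩
    intro m hm
    rw [Finset.mem_Icc] at hm
    rw [hval]
    by_cases hle : m ≤ n
    · calc sumDoF m γ ≤ m := sumDoF_le_card m hm.1 γ
        _ ≤ (n : ℝ) := by exact_mod_cast hle
    · push_neg at hle
      have hm2 : 2 ≤ m := by omega
      have hmn : (n : ℝ) + 1 ≤ (m : ℝ) := by exact_mod_cast hle
      have hmden : (0 : ℝ) < (m : ℝ) * ((m : ℝ) - 1) := by nlinarith
      calc sumDoF m γ ≤ γ / ((m : ℝ) * ((m : ℝ) - 1)) := sumDoF_le_ratio m hm2 γ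
        _ ≤ (n : ℝ) := by
            rw [div_le_iff₀ hmden]
            nlinarith [mul_nonneg (by linarith : (0:ℝ) ≤ (m:ℝ) - n - 1)
              (by linarith : (0:ℝ) ≤ (m:ℝ) + n)]
  · intro γ hγ
    obtain ⟨hγ1, hγ2⟩ := hγ
    have hγpos : (0 : ℝ) < γ := by nlinarith
    have hval : sumDoF n γ = γ / (n * ((n : ℝ) - 1)) := sumDoF_val2 n hn γ hγ2
    refine ⟨?_, hval⟩
    intro m hm
    rw [Finset.mem_Icc] at hm
    rw [hval]
    have hnden : (0 : ℝ) < (n : ℝ) * ((n : ℝ) - 1) := by nlinarith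
    have hvlb : (n : ℝ) - 1 ≤ γ / ((n : ℝ) * ((n : ℝ) - 1)) := by
      rw [le_div_iff₀ hnden]
      nlinarith
    by_cases hle : m < n
    · have : (m : ℝ) ≤ (n : ℝ) - 1 := by
        have : (m : ℝ) + 1 ≤ (n : ℝ) := by exact_mod_cast hle
        linarith
      calc sumDoF m γ ≤ m := sumDoF_le_card m hm.1 γ
        _ ≤ (n : ℝ) - 1 := this
        _ ≤ _ := hvlb
    · push_neg at hle
      rcases eq_or_lt_of_le hle with heq | hlt
      · rw [← heq, hval]
      · have hm2 : 2 ≤ m := by omega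
        have hmn : (n : ℝ) < (m : ℝ) := by exact_mod_cast hlt
        have hmden : (0 : ℝ) < (m : ℝ) * ((m : ℝ) - 1) := by nlinarith
        calc sumDoF m γ ≤ γ / ((m : ℝ) * ((m : ℝ) - 1)) := sumDoF_le_ratio m hm2 γ
          _ ≤ γ / ((n : ℝ) * ((n : ℝ) - 1)) := by
              apply div_le_div_of_nonneg_left hγpos.le hnden
              nlinarith
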